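/- Let K_e = {(x¹,x²,x³) ∈ ℝ³ : (x³)² = (x¹)²/a² + (x²)²/b², x³ > 0} with a > b > 0. Let p₁ ≠ p₂ ∈ K_e, v = (p₂ − p₁)/‖p₂ − p₁‖, and let m₁₂, I₁, I₂ be computed at (p₂, v) (equivalently at any point of the line through p₁, p₂). Assume I₁ > 0 and I₂ > 0. Then sin² ∠p₁Op₂ = 4a²b²I₁I₂ / ( 4a²b²I₁I₂ + ( (1+a²)(1+b²)m₁₂² − (a²b²I₁ − I₂) )² ). Moreover a²I₁ − I₂ = (a² − b²)m₁₃² + (a² + 1)m₁₂², so that m₁₂² ≤ (a²I₁ − I₂)/(a² + 1). -/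

import Mathlib

open Real
open scoped RealInnerProductSpace

set_option maxHeartbeats 2000000

noncomputable section

/-- The elliptic cone `(x³)² = (x¹)²/a² + (x²)²/b²`, `x³ > 0`. -/
def Ke (a b : ℝ) : Set (EuclideanSpace ℝ (Fin 3)) :=
  {x | (x 2) ^ 2 = (x 0) ^ 2 / a ^ 2 + (x 1) ^ 2 / b ^ 2 ∧ 0 < x 2}

def m12 (x v : EuclideanSpace ℝ (Fin 3)) : ℝ := x 0 * v 1 - x 1 * v 0
def m13 (x v : EuclideanSpace ℝ (Fin 3)) : ℝ := x 0 * v 2 - x 2 * v 0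
def m23 (x v : EuclideanSpace ℝ (Fin 3)) : ℝ := x 1 * v 2 - x 2 * v 1

def I1 (x v : EuclideanSpace ℝ (Fin 3)) : ℝ := m12 x v ^ 2 + m13 x v ^ 2 + m23 x v ^ 2

def I2 (a b : ℝ) (x v : EuclideanSpace ℝ (Fin 3)) : ℝ :=
  a ^ 2 * m23 x v ^ 2 + b ^ 2 * m13 x v ^ 2 - m12 x v ^ 2

lemma key_ident (a b x1 y1 z1 x2 y2 z2 : ℝ) (ha : a ≠ 0) (hb : b ≠ 0)
    (h1 : b^2*x1^2 + a^2*y1^2 = a^2*b^2*z1^2)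
    (h2 : b^2*x2^2 + a^2*y2^2 = a^2*b^2*z2^2) :
    ((1+a^2)*(1+b^2)*(x1*y2-x2*y1)^2
      - (a^2*b^2*((x1*y2-x2*y1)^2+(x1*z2-x2*z1)^2+(y1*z2-y2*z1)^2)
         - (a^2*(y1*z2-y2*z1)^2 + b^2*(x1*z2-x2*z1)^2 - (x1*y2-x2*y1)^2)))^2
    = 4*a^2*b^2*(a^2*(y1*z2-y2*z1)^2 + b^2*(x1*z2-x2*z1)^2 - (x1*y2-x2*y1)^2)
        * (x1*x2+y1*y2+z1*z2)^2 := by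
  have hab : a^4*b^4 ≠ 0 := by positivity
  apply mul_left_cancel₀ hab
  linear_combination (-b^6*x1^2*x2^4 - a^2*b^4*y1^2*x2^4 + (-2)*a^2*b^4*x1^2*x2^2*y2^2 - a^2*b^6*z1^2*x2^4 + (-2)*a^2*b^6*y1^2*x2^4 + (4)*a^2*b^6*x1*z1*x2^3*z2 + (4)*a^2*b^6*x1*y1*x2^3*y2 + (-2)*a^2*b^6*x1^2*x2^2*z2^2 + (2)*a^2*b^6*x1^2*x2^4 + (-2)*a^4*b^2*y1^2*x2^2*y2^2 - a^4*b^2*x1^2*y2^4 + (-2)*a^4*b^4*z1^2*x2^2*y2^2 + (4)*a^4*b^4*y1*z1*x2^2*y2*z2 + (-2)*a^4*b^4*y1^2*x2^2*z2^2 + (4)*a^4*b^4*x1*z1*x2*y2^2*z2 + (4)*a^4*b^4*x1*y1*x2*y2^3 + (4)*a^4*b^4*x1*y1*x2^3*y2 + (-2)*a^4*b^4*x1^2*y2^2*z2^2 + (4)*a^4*b^6*z1^2*x2^2*z2^2 + (2)*a^4*b^6*z1^2*x2^2*y2^2 + (2)*a^4*b^6*z1^2*x2^4 + (4)*a^4*b^6*y1*z1*x2^2*y2*z2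 + (2)*a^4*b^6*y1^2*x2^2*z2^2 + (6)*a^4*b^6*y1^2*x2^2*y2^2 + (2)*a^4*b^6*y1^2*x2^4 + (-8)*a^4*b^6*x1*z1*x2*z2^3 + (-4)*a^4*b^6*x1*z1*x2*y2^2*z2 + (-8)*a^4*b^6*x1*y1*x2*y2*z2^2 + (-4)*a^4*b^6*x1*y1*x2*y2^3 + (4)*a^4*b^6*x1*y1*x2^3*y2 + (4)*a^4*b^6*x1^2*z2^4 + (2)*a^4*b^6*x1^2*y2^2*z2^2 + a^4*b^6*x1^2*y2^4 + (-4)*a^4*b^6*x1^2*x2^2*z2^2 + (3)*a^4*b^6*x1^2*x2^4 - a^6*y1^2*y2^4 - a^6*b^2*z1^2*y2^4 + (4)*a^6*b^2*y1*z1*y2^3*z2 + (-2)*a^6*b^2*y1^2*y2^2*z2^2 + (2)*a^6*b^2*y1^2*y2^4 + (4)*a^6*b^2*x1*y1*x2*y2^3 + (-2)*a^6*b^2*x1^2*y2^4 + (4)*a^6*b^4*z1^2*y2^2*z2^2 + (2)*a^6*b^4*z1^2*y2^4 + (2)*a^6*b^4*z1^2*x2^2*y2^2 + (-8)*a^6*b^4*y1*z1*y2*z2^3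 + (-4)*a^6*b^4*y1*z1*x2^2*y2*z2 + (4)*a^6*b^4*y1^2*z2^4 + (-4)*a^6*b^4*y1^2*y2^2*z2^2 + (3)*a^6*b^4*y1^2*y2^4 + (2)*a^6*b^4*y1^2*x2^2*z2^2 + a^6*b^4*y1^2*x2^4 + (4)*a^6*b^4*x1*z1*x2*y2^2*z2 + (-8)*a^6*b^4*x1*y1*x2*y2*z2^2 + (4)*a^6*b^4*x1*y1*x2*y2^3 + (-4)*a^6*b^4*x1*y1*x2^3*y2 + (2)*a^6*b^4*x1^2*y2^2*z2^2 + (2)*a^6*b^4*x1^2*y2^4 + (6)*a^6*b^4*x1^2*x2^2*y2^2 - a^6*b^6*z1^2*y2^4 + (-2)*a^6*b^6*z1^2*x2^2*y2^2 - a^6*b^6*z1^2*x2^4 + (4)*a^6*b^6*y1*z1*y2^3*z2 + (4)*a^6*b^6*y1*z1*x2^2*y2*z2 + (-6)*a^6*b^6*y1^2*y2^2*z2^2 + (-2)*a^6*b^6*y1^2*x2^2*z2^2 + (4)*a^6*b^6*x1*z1*x2*y2^2*z2 + (4)*a^6*b^6*x1*z1*x2^3*z2 + (-8)*a^6*b^6*x1*y1*x2*y2*z2^2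 + (-2)*a^6*b^6*x1^2*y2^2*z2^2 + (-6)*a^6*b^6*x1^2*x2^2*z2^2) * h1 + (b^6*x1^4*x2^2 + (2)*a^2*b^4*x1^2*y1^2*x2^2 + a^2*b^4*x1^4*y2^2 + (2)*a^2*b^6*x1^2*y1^2*x2^2 + (-4)*a^2*b^6*x1^3*z1*x2*z2 + (-4)*a^2*b^6*x1^3*y1*x2*y2 + (3)*a^2*b^6*x1^4*z2^2 + (-2)*a^2*b^6*x1^4*x2^2 + a^4*b^2*y1^4*x2^2 + (2)*a^4*b^2*x1^2*y1^2*y2^2 + (2)*a^4*b^4*y1^4*x2^2 + (-4)*a^4*b^4*x1*y1^2*z1*x2*z2 + (-4)*a^4*b^4*x1*y1^3*x2*y2 + (-4)*a^4*b^4*x1^2*y1*z1*y2*z2 + (6)*a^4*b^4*x1^2*y1^2*z2^2 + (-2)*a^4*b^4*x1^2*y1^2*y2^2 + (-2)*a^4*b^4*x1^2*y1^2*x2^2 + (-4)*a^4*b^4*x1^3*y1*x2*y2 + (2)*a^4*b^4*x1^4*y2^2 + a^4*b^6*y1^4*x2^2 + (-4)*a^4*b^6*x1*y1^2*z1*x2*z2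 + (-4)*a^4*b^6*x1*y1^3*x2*y2 + (4)*a^4*b^6*x1^2*y1*z1*y2*z2 + (2)*a^4*b^6*x1^2*y1^2*z2^2 + (-2)*a^4*b^6*x1^2*y1^2*x2^2 + (-4)*a^4*b^6*x1^3*y1*x2*y2 + (2)*a^4*b^6*x1^4*z2^2 + (-3)*a^4*b^6*x1^4*x2^2 + a^6*y1^4*y2^2 + (-4)*a^6*b^2*y1^3*z1*y2*z2 + (3)*a^6*b^2*y1^4*z2^2 + (-2)*a^6*b^2*y1^4*y2^2 + (-4)*a^6*b^2*x1*y1^3*x2*y2 + (2)*a^6*b^2*x1^2*y1^2*y2^2 + (2)*a^6*b^4*y1^4*z2^2 + (-3)*a^6*b^4*y1^4*y2^2 + (4)*a^6*b^4*x1*y1^2*z1*x2*z2 + (-4)*a^6*b^4*x1*y1^3*x2*y2 + (-4)*a^6*b^4*x1^2*y1*z1*y2*z2 + (2)*a^6*b^4*x1^2*y1^2*z2^2 + (-2)*a^6*b^4*x1^2*y1^2*y2^2 + (-4)*a^6*b^4*x1^3*y1*x2*y2 + a^6*b^4*x1^4*y2^2 + (4)*a^6*b^6*y1^3*z1*y2*z2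 - a^6*b^6*y1^4*z2^2 + (4)*a^6*b^6*x1*y1^2*z1*x2*z2 + (4)*a^6*b^6*x1^2*y1*z1*y2*z2 + (-2)*a^6*b^6*x1^2*y1^2*z2^2 + (4)*a^6*b^6*x1^3*z1*x2*z2 - a^6*b^6*x1^4*z2^2) * h2

/-- The explicit formula for `sin² ∠p₁Op₂` in terms of `I₁`, `I₂`, `m₁₂`, the identity
`a²I₁ − I₂ = (a² − b²)m₁₃² + (a² + 1)m₁₂²`, and the resulting bound on `m₁₂²`. -/
theorem stmt_18 (a b : ℝ) (hab : b < a) (hb : 0 < b)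
    (p₁ p₂ : EuclideanSpace ℝ (Fin 3)) (h₁ : p₁ ∈ Ke a b) (h₂ : p₂ ∈ Ke a b) (hne : p₁ ≠ p₂)
    (v : EuclideanSpace ℝ (Fin 3)) (hv : v = ‖p₂ - p₁‖⁻¹ • (p₂ - p₁))
    (hI1 : 0 < I1 p₂ v) (hI2 : 0 < I2 a b p₂ v) :
    Real.sin (InnerProductGeometry.angle p₁ p₂) ^ 2 =
        4 * a ^ 2 * b ^ 2 * I1 p₂ v * I2 a b p₂ v /
          (4 * a ^ 2 * b ^ 2 * I1 p₂ v * I2 a b p₂ v +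
            ((1 + a ^ 2) * (1 + b ^ 2) * m12 p₂ v ^ 2 -
              (a ^ 2 * b ^ 2 * I1 p₂ v - I2 a b p₂ v)) ^ 2) ∧
      a ^ 2 * I1 p₂ v - I2 a b p₂ v =
        (a ^ 2 - b ^ 2) * m13 p₂ v ^ 2 + (a ^ 2 + 1) * m12 p₂ v ^ 2 ∧
      m12 p₂ v ^ 2 ≤ (a ^ 2 * I1 p₂ v - I2 a b p₂ v) / (a ^ 2 + 1) := by
  obtain ⟨hc1, hz1⟩ := h₁
  obtain ⟨hc2, hz2⟩ := h₂
  have ha : 0 < a := hb.trans hab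
  have ha' : a ≠ 0 := ha.ne'
  have hb' : b ≠ 0 := hb.ne'
  have hid : a ^ 2 * I1 p₂ v - I2 a b p₂ v =
      (a ^ 2 - b ^ 2) * m13 p₂ v ^ 2 + (a ^ 2 + 1) * m12 p₂ v ^ 2 := by
    simp only [I1, I2]; ring
  refine ⟨?_, hid, ?_⟩
  swap
  · rw [hid, le_div_iff₀ (by positivity)]
    have h13 : 0 ≤ (a ^ 2 - b ^ 2) * m13 p₂ v ^ 2 :=
      mul_nonneg (sub_nonneg.2 (pow_le_pow_left₀ hb.le hab.le 2)) (sq_nonneg _)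
    have he : m12 p₂ v ^ 2 * (a ^ 2 + 1) = (a ^ 2 + 1) * m12 p₂ v ^ 2 := by ring
    rw [he]
    exact le_add_of_nonneg_left h13
  -- notation for coordinates
  set x1 := p₁ 0 with hx1; set y1 := p₁ 1 with hy1; set z1 := p₁ 2 with hz1d
  set x2 := p₂ 0 with hx2; set y2 := p₂ 1 with hy2; set z2 := p₂ 2 with hz2d
  have h1 : b^2*x1^2 + a^2*y1^2 = a^2*b^2*z1^2 := by
    field_simp at hc1; linear_combination -hc1
  have h2 : b^2*x2^2 + a^2*y2^2 = a^2*b^2*z2^2 := by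
    field_simp at hc2; linear_combination -hc2
  have hrpos : (0:ℝ) < ‖p₂ - p₁‖ := by
    rw [norm_pos_iff, sub_ne_zero]; exact fun h => hne h.symm
  set r := ‖p₂ - p₁‖ with hrdef
  have hr' : r ≠ 0 := hrpos.ne'
  have hvi : ∀ i, v i = r⁻¹ * (p₂ i - p₁ i) := by
    intro i; rw [hv]; simp [PiLp.smul_apply, PiLp.sub_apply, smul_eq_mul]
  have hm12 : m12 p₂ v = r⁻¹ * (x1*y2 - x2*y1) := by
    simp only [m12, hvi 0, hvi 1, ← hx1, ← hy1, ← hx2, ← hy2]; ring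
  have hm13 : m13 p₂ v = r⁻¹ * (x1*z2 - x2*z1) := by
    simp only [m13, hvi 0, hvi 2, ← hx1, ← hz1d, ← hx2, ← hz2d]; ring
  have hm23 : m23 p₂ v = r⁻¹ * (y1*z2 - y2*z1) := by
    simp only [m23, hvi 1, hvi 2, ← hy1, ← hz1d, ← hy2, ← hz2d]; ring
  set J1 := (x1*y2-x2*y1)^2 + (x1*z2-x2*z1)^2 + (y1*z2-y2*z1)^2 with hJ1def
  set J2 := a^2*(y1*z2-y2*z1)^2 + b^2*(x1*z2-x2*z1)^2 - (x1*y2-x2*y1)^2 with hJ2def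
  have hI1e : I1 p₂ v = r⁻¹^2 * J1 := by
    rw [I1, hm12, hm13, hm23, hJ1def]; ring
  have hI2e : I2 a b p₂ v = r⁻¹^2 * J2 := by
    rw [I2, hm12, hm13, hm23, hJ2def]; ring
  have hJ2pos : 0 < J2 := by
    have : J2 = r^2 * I2 a b p₂ v := by rw [hI2e]; field_simp
    rw [this]; positivity
  -- inner product and norms
  have hinner : ⟪p₁, p₂⟫ = x1*x2 + y1*y2 + z1*z2 := by
    simp [PiLp.inner_apply, RCLike.inner_apply, conj_trivial, Fin.sum_univ_three,
      ← hx1, ← hy1, ← hz1d, ← hx2, ← hy2, ← hz2d]; ring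
  have hn1 : ‖p₁‖^2 = x1^2 + y1^2 + z1^2 := by
    rw [← real_inner_self_eq_norm_sq]
    simp only [PiLp.inner_apply, RCLike.inner_apply, conj_trivial, Fin.sum_univ_three,
      ← hx1, ← hy1, ← hz1d]; ring
  have hn2 : ‖p₂‖^2 = x2^2 + y2^2 + z2^2 := by
    rw [← real_inner_self_eq_norm_sq]
    simp only [PiLp.inner_apply, RCLike.inner_apply, conj_trivial, Fin.sum_univ_three,
      ← hx2, ← hy2, ← hz2d]; ring
  have hS1 : 0 < x1^2 + y1^2 + z1^2 :=
    lt_of_lt_of_le (pow_pos hz1 2) (le_add_of_nonneg_left (by positivity))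
  have hS2 : 0 < x2^2 + y2^2 + z2^2 :=
    lt_of_lt_of_le (pow_pos hz2 2) (le_add_of_nonneg_left (by positivity))
  set c := x1*x2 + y1*y2 + z1*z2 with hcdef
  -- sin^2 of the angle
  have hsin : Real.sin (InnerProductGeometry.angle p₁ p₂) ^ 2 =
      1 - c^2 / ((x1^2+y1^2+z1^2) * (x2^2+y2^2+z2^2)) := by
    rw [Real.sin_sq, InnerProductGeometry.cos_angle, div_pow, mul_pow, hn1, hn2, hinner]
  rw [hsin, hI1e, hI2e, hm12]
  have hstep : 4 * a ^ 2 * b ^ 2 * (r⁻¹ ^ 2 * J1) * (r⁻¹ ^ 2 * J2) /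
      (4 * a ^ 2 * b ^ 2 * (r⁻¹ ^ 2 * J1) * (r⁻¹ ^ 2 * J2) +
        ((1 + a ^ 2) * (1 + b ^ 2) * (r⁻¹ * (x1*y2 - x2*y1)) ^ 2 -
          (a ^ 2 * b ^ 2 * (r⁻¹ ^ 2 * J1) - r⁻¹ ^ 2 * J2)) ^ 2) =
      (r⁻¹^4 * (4 * a^2 * b^2 * J1 * J2)) /
      (r⁻¹^4 * (4 * a^2 * b^2 * J1 * J2 +
        ((1+a^2)*(1+b^2)*(x1*y2-x2*y1)^2 - (a^2*b^2*J1 - J2))^2)) := by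
    ring
  rw [hstep, mul_div_mul_left _ _ (by positivity : (r⁻¹^4 : ℝ) ≠ 0)]
  have hkey := key_ident a b x1 y1 z1 x2 y2 z2 ha' hb' h1 h2
  rw [← hJ1def, ← hJ2def, ← hcdef] at hkey
  rw [hkey]
  have hSc : (x1^2+y1^2+z1^2) * (x2^2+y2^2+z2^2) = J1 + c^2 := by
    rw [hJ1def, hcdef]; ring
  rw [hSc]
  have hpos : 0 < J1 + c^2 := by rw [← hSc]; positivity
  have hden : 4*a^2*b^2*J1*J2 + 4*a^2*b^2*J2*c^2 = (4*a^2*b^2*J2) * (J1 + c^2) := by ring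
  have hnum : 4*a^2*b^2*J1*J2 = (4*a^2*b^2*J2) * J1 := by ring
  rw [hden, hnum, mul_div_mul_left _ _ (by positivity : (4*a^2*b^2*J2 : ℝ) ≠ 0)]
  field_simp
  ring
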